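/- Let r > 0 and let μ be a finite signed measure on the interval [−r, 0]. Then there exists a unique continuous function f : [0, ∞) → ℝ such that, defining f(v) = 0 for v < 0, one has f(t) = 1 + ∫₀ᵗ ( ∫_{[−r,0]} f(s + θ) dμ(θ) ) ds for all t ≥ 0. -/

import Mathlib

/-- Integral of a real-valued function against a finite signed measure, defined through the
Jordan decomposition `μ = μ⁺ − μ⁻`. -/
noncomputable def sintegral {α : Type*} [MeasurableSpace α]
    (μ : MeasureTheory.SignedMeasure α) (f : α → ℝ) : ℝ :=
  (∫ x, f x ∂μ.toJordanDecomposition.posPart) - ∫ x, f x ∂μ.toJordanDecomposition.negPart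

open MeasureTheory Set Real Filter intervalIntegral

namespace Stmt12

variable {α : Type*} [MeasurableSpace α]

/-- total variation constant -/
noncomputable def sC (μ : SignedMeasure α) : ℝ :=
  (μ.toJordanDecomposition.posPart Set.univ).toReal +
    (μ.toJordanDecomposition.negPart Set.univ).toReal

lemma sC_nonneg (μ : SignedMeasure α) : 0 ≤ sC μ :=
  add_nonneg ENNReal.toReal_nonneg ENNReal.toReal_nonneg

lemma sint_bound (μ : SignedMeasure α) (F : α → ℝ) {M : ℝ}
    (h : ∀ x, |F x| ≤ M) : |sintegral μ F| ≤ sC μ * M := by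
  have hp : ‖∫ x, F x ∂μ.toJordanDecomposition.posPart‖ ≤
      M * (μ.toJordanDecomposition.posPart Set.univ).toReal :=
    norm_integral_le_of_norm_le_const (Filter.Eventually.of_forall h)
  have hn : ‖∫ x, F x ∂μ.toJordanDecomposition.negPart‖ ≤
      M * (μ.toJordanDecomposition.negPart Set.univ).toReal :=
    norm_integral_le_of_norm_le_const (Filter.Eventually.of_forall h)
  rw [Real.norm_eq_abs] at hp hn
  calc |sintegral μ F| ≤ |∫ x, F x ∂μ.toJordanDecomposition.posPart| +
        |∫ x, F x ∂μ.toJordanDecomposition.negPart| := abs_sub _ _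
    _ ≤ M * (μ.toJordanDecomposition.posPart Set.univ).toReal +
        M * (μ.toJordanDecomposition.negPart Set.univ).toReal := add_le_add hp hn
    _ = sC μ * M := by unfold sC; ring

lemma integrable_of_bounded {ν : Measure α} [IsFiniteMeasure ν] {F : α → ℝ} {M : ℝ}
    (hF : Measurable F) (h : ∀ x, |F x| ≤ M) : Integrable F ν :=
  Integrable.mono' (integrable_const M) hF.aestronglyMeasurable
    (Filter.Eventually.of_forall fun x => by simpa using h x)

lemma sint_sub (μ : SignedMeasure α) {F G : α → ℝ} {M N : ℝ}
    (hF : Measurable F) (hbF : ∀ x, |F x| ≤ M)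
    (hG : Measurable G) (hbG : ∀ x, |G x| ≤ N) :
    sintegral μ (fun x => F x - G x) = sintegral μ F - sintegral μ G := by
  unfold sintegral
  rw [integral_sub (integrable_of_bounded hF hbF) (integrable_of_bounded hG hbG),
    integral_sub (integrable_of_bounded hF hbF) (integrable_of_bounded hG hbG)]
  ring

lemma sint_meas (μ : SignedMeasure α) (c : α → ℝ) (hc : Measurable c)
    {F : ℝ → ℝ} (hF : Measurable F) :
    Measurable fun s : ℝ => sintegral μ (fun θ => F (s + c θ)) := by
  have key : ∀ ν : Measure α, IsFiniteMeasure ν →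
      Measurable fun s : ℝ => ∫ θ, F (s + c θ) ∂ν := by
    intro ν hν
    have : StronglyMeasurable fun p : ℝ × α => F (p.1 + c p.2) :=
      (hF.comp (measurable_fst.add (hc.comp measurable_snd))).stronglyMeasurable
    exact this.integral_prod_right'.measurable
  exact ((key _ inferInstance).sub (key _ inferInstance))


variable {r : ℝ}

/-- the delay integrand -/
noncomputable def J (μ : SignedMeasure (Icc (-r) (0:ℝ))) (f : ℝ → ℝ) : ℝ → ℝ :=
  fun s => sintegral μ fun θ => f (s + θ.1)

lemma J_meas (μ : SignedMeasure (Icc (-r) (0:ℝ))) {f : ℝ → ℝ} (hf : Measurable f) :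
    Measurable (J μ f) :=
  sint_meas μ Subtype.val measurable_subtype_coe hf

lemma J_bound (μ : SignedMeasure (Icc (-r) (0:ℝ))) {f : ℝ → ℝ} {s M : ℝ}
    (h : ∀ v ≤ s, |f v| ≤ M) : |J μ f s| ≤ sC μ * M := by
  refine sint_bound μ _ fun θ => h _ ?_
  have := θ.2.2
  linarith

/-- measurability of the zero-extension -/
lemma ext_meas {f : ℝ → ℝ} (h0 : ∀ v < (0:ℝ), f v = 0)
    (hc : ContinuousOn f (Ici 0)) : Measurable f := by
  have hfe : f = (Ici (0:ℝ)).indicator (fun v => f (max v 0)) := by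
    funext v
    rcases lt_or_ge v 0 with hv | hv
    · rw [Set.indicator_of_notMem (by simpa using not_le.mpr hv), h0 v hv]
    · rw [Set.indicator_of_mem (by simpa using hv), max_eq_left hv]
  have hcont : Continuous fun v : ℝ => f (max v 0) :=
    hc.comp_continuous (continuous_id.max continuous_const) fun x => le_max_right x 0
  rw [hfe]
  exact hcont.measurable.indicator measurableSet_Ici

lemma bounded_on {f : ℝ → ℝ} (h0 : ∀ v < (0:ℝ), f v = 0)
    (hc : ContinuousOn f (Ici 0)) (T : ℝ) :
    ∃ M : ℝ, 0 ≤ M ∧ ∀ v ≤ T, |f v| ≤ M := by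
  rcases lt_or_ge T 0 with hT | hT
  · exact ⟨0, le_refl 0, fun v hv => by rw [h0 v (lt_of_le_of_lt hv hT)]; simp⟩
  · obtain ⟨M, hM⟩ := (isCompact_Icc (a := (0:ℝ)) (b := T)).exists_bound_of_continuousOn
      (hc.mono (fun x hx => hx.1))
    refine ⟨max M 0, le_max_right _ _, fun v hv => ?_⟩
    rcases lt_or_ge v 0 with hv0 | hv0
    · rw [h0 v hv0]; simpa using le_max_right M 0
    · exact le_trans (by simpa using hM v ⟨hv0, hv⟩) (le_max_left _ _)

lemma J_intervalIntegrable (μ : SignedMeasure (Icc (-r) (0:ℝ))) {f : ℝ → ℝ}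
    (hf : Measurable f) (hloc : ∀ T, ∃ M : ℝ, 0 ≤ M ∧ ∀ v ≤ T, |f v| ≤ M)
    (a b : ℝ) : IntervalIntegrable (J μ f) volume a b := by
  obtain ⟨M, hM0, hM⟩ := hloc (max a b)
  rw [intervalIntegrable_iff]
  refine Measure.integrableOn_of_bounded (M := sC μ * M) ?_ ((J_meas μ hf).aestronglyMeasurable) ?_
  · exact (measure_Ioc_lt_top).ne
  · refine (ae_restrict_iff' measurableSet_uIoc).2 (Filter.Eventually.of_forall fun s hs => ?_)
    rw [Real.norm_eq_abs]
    exact J_bound μ fun v hv => hM v (le_trans hv hs.2)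

lemma int_exp {K : ℝ} (hK : K ≠ 0) (t : ℝ) :
    ∫ s in (0:ℝ)..t, Real.exp (K * s) = (Real.exp (K * t) - 1) / K := by
  rw [integral_comp_mul_left (fun x => Real.exp x) hK]
  simp [integral_exp, smul_eq_mul]
  ring

/-- main quantitative estimate for the primitive of `J μ f`. -/
lemma prim_est (μ : SignedMeasure (Icc (-r) (0:ℝ))) {f : ℝ → ℝ} {K D t : ℝ}
    (hK : 0 < K) (ht : 0 ≤ t) (hD : 0 ≤ D)
    (hb : ∀ s : ℝ, 0 ≤ s → ∀ v ≤ s, |f v| ≤ Real.exp (K * s) * D) :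
    |∫ s in (0:ℝ)..t, J μ f s| ≤ sC μ * D * (Real.exp (K * t) - 1) / K := by
  have key : ‖∫ s in (0:ℝ)..t, J μ f s‖ ≤
      |∫ s in (0:ℝ)..t, sC μ * D * Real.exp (K * s)| := by
    apply intervalIntegral.norm_integral_le_abs_of_norm_le
    · rw [uIoc_of_le ht]
      refine (ae_restrict_iff' measurableSet_Ioc).2 (Filter.Eventually.of_forall fun s hs => ?_)
      rw [Real.norm_eq_abs]
      calc |J μ f s| ≤ sC μ * (Real.exp (K * s) * D) := J_bound μ (hb s hs.1.le)
        _ = sC μ * D * Real.exp (K * s) := by ring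
    · exact (Continuous.intervalIntegrable (by continuity) 0 t)
  rw [Real.norm_eq_abs] at key
  refine key.trans ?_
  rw [intervalIntegral.integral_const_mul, int_exp hK.ne' t]
  have h1 : (1:ℝ) ≤ Real.exp (K * t) := by
    rw [← Real.exp_zero]; exact Real.exp_le_exp.2 (by positivity)
  have hC := sC_nonneg μ
  rw [abs_of_nonneg (mul_nonneg (mul_nonneg hC hD) (div_nonneg (by linarith) hK.le))]
  exact le_of_eq (by ring)



----------------------------------------------------------------
section Construction

variable (μ : SignedMeasure (Icc (-r) (0:ℝ)))

/-- the exponential weight -/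
noncomputable def Kc : ℝ := 2 * sC μ + 1

lemma Kc_pos : 0 < Kc μ := by have := sC_nonneg μ; unfold Kc; linarith

/-- weighted extension of a bounded continuous function on `[0,∞)` to `ℝ`. -/
noncomputable def Fe (g : BoundedContinuousFunction (Ici (0:ℝ)) ℝ) : ℝ → ℝ :=
  fun v => if h : 0 ≤ v then Real.exp (Kc μ * v) * g ⟨v, h⟩ else 0

lemma Fe_zero (g : BoundedContinuousFunction (Ici (0:ℝ)) ℝ) {v : ℝ} (hv : v < 0) :
    Fe μ g v = 0 := dif_neg (not_le.mpr hv)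

lemma Fe_cont (g : BoundedContinuousFunction (Ici (0:ℝ)) ℝ) :
    ContinuousOn (Fe μ g) (Ici 0) := by
  have hc : Continuous fun v : ℝ =>
      Real.exp (Kc μ * v) * g ⟨max v 0, le_max_right v 0⟩ := by
    apply Continuous.mul
    · exact Real.continuous_exp.comp (continuous_const.mul continuous_id)
    · exact g.continuous.comp ((continuous_id.max continuous_const).subtype_mk _)
  refine ContinuousOn.congr hc.continuousOn fun v hv => ?_
  have hv' : (0:ℝ) ≤ v := hv
  rw [Fe, dif_pos hv']
  congr 2
  exact Subtype.ext (max_eq_left hv').symm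

lemma Fe_bound (g : BoundedContinuousFunction (Ici (0:ℝ)) ℝ) {s : ℝ} (hs : 0 ≤ s)
    {v : ℝ} (hv : v ≤ s) : |Fe μ g v| ≤ Real.exp (Kc μ * s) * ‖g‖ := by
  rcases lt_or_ge v 0 with h | h
  · rw [Fe_zero μ g h, abs_zero]; positivity
  · rw [Fe, dif_pos h, abs_mul, abs_of_nonneg (Real.exp_nonneg _)]
    apply mul_le_mul
    · exact Real.exp_le_exp.2 (mul_le_mul_of_nonneg_left hv (Kc_pos μ).le)
    · exact (g.norm_coe_le_norm _).trans_eq' (Real.norm_eq_abs _).symm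
    · exact abs_nonneg _
    · positivity

lemma Fe_sub_bound (g₁ g₂ : BoundedContinuousFunction (Ici (0:ℝ)) ℝ) {s : ℝ} (hs : 0 ≤ s)
    {v : ℝ} (hv : v ≤ s) :
    |Fe μ g₁ v - Fe μ g₂ v| ≤ Real.exp (Kc μ * s) * dist g₁ g₂ := by
  rcases lt_or_ge v 0 with h | h
  · rw [Fe_zero μ g₁ h, Fe_zero μ g₂ h, sub_zero, abs_zero]; positivity
  · rw [Fe, Fe, dif_pos h, dif_pos h, ← mul_sub, abs_mul,
      abs_of_nonneg (Real.exp_nonneg _)]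
    apply mul_le_mul
    · exact Real.exp_le_exp.2 (mul_le_mul_of_nonneg_left hv (Kc_pos μ).le)
    · exact (g₁.dist_coe_le_dist (g := g₂) _).trans_eq' (Real.dist_eq _ _).symm
    · exact abs_nonneg _
    · positivity

lemma Fe_meas (g : BoundedContinuousFunction (Ici (0:ℝ)) ℝ) : Measurable (Fe μ g) :=
  ext_meas (fun _ h => Fe_zero μ g h) (Fe_cont μ g)

lemma Fe_loc (g : BoundedContinuousFunction (Ici (0:ℝ)) ℝ) :
    ∀ T, ∃ M : ℝ, 0 ≤ M ∧ ∀ v ≤ T, |Fe μ g v| ≤ M :=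
  bounded_on (fun _ h => Fe_zero μ g h) (Fe_cont μ g)

/-- the underlying real function of the Picard map -/
noncomputable def Phi0 (g : BoundedContinuousFunction (Ici (0:ℝ)) ℝ) : ℝ → ℝ :=
  fun t => Real.exp (-(Kc μ * t)) * (1 + ∫ s in (0:ℝ)..t, J μ (Fe μ g) s)

lemma Phi0_cont (g : BoundedContinuousFunction (Ici (0:ℝ)) ℝ) : Continuous (Phi0 μ g) := by
  apply Continuous.mul
  · exact Real.continuous_exp.comp (continuous_const.mul continuous_id).neg
  · exact continuous_const.add
      (intervalIntegral.continuous_primitive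
        (J_intervalIntegrable μ (Fe_meas μ g) (Fe_loc μ g)) 0)

lemma Phi0_bound (g : BoundedContinuousFunction (Ici (0:ℝ)) ℝ) {t : ℝ} (ht : 0 ≤ t) :
    |Phi0 μ g t| ≤ 1 + ‖g‖ := by
  have hK := Kc_pos μ
  have hC := sC_nonneg μ
  have hint : |∫ s in (0:ℝ)..t, J μ (Fe μ g) s| ≤
      sC μ * ‖g‖ * (Real.exp (Kc μ * t) - 1) / Kc μ :=
    prim_est μ hK ht (norm_nonneg g) fun s hs v hv => Fe_bound μ g hs hv
  have hE : Real.exp (-(Kc μ * t)) * Real.exp (Kc μ * t) = 1 := by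
    rw [← Real.exp_add]; simp
  have hE1 : Real.exp (-(Kc μ * t)) ≤ 1 := Real.exp_le_one_iff.2 (neg_nonpos.2 (by positivity))
  have hE0 : 0 < Real.exp (-(Kc μ * t)) := Real.exp_pos _
  rw [Phi0, abs_mul, abs_of_nonneg hE0.le]
  have h2 : |1 + ∫ s in (0:ℝ)..t, J μ (Fe μ g) s| ≤
      1 + sC μ * ‖g‖ * (Real.exp (Kc μ * t) - 1) / Kc μ :=
    (abs_add_le _ _).trans (by rw [abs_one]; linarith)
  calc Real.exp (-(Kc μ * t)) * |1 + ∫ s in (0:ℝ)..t, J μ (Fe μ g) s|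
      ≤ Real.exp (-(Kc μ * t)) *
        (1 + sC μ * ‖g‖ * (Real.exp (Kc μ * t) - 1) / Kc μ) :=
        mul_le_mul_of_nonneg_left h2 hE0.le
    _ ≤ 1 + ‖g‖ := by
        have hg := norm_nonneg g
        have h3 : sC μ / Kc μ ≤ 1 := by
          rw [div_le_one hK]; unfold Kc; linarith
        have expand : Real.exp (-(Kc μ * t)) *
            (1 + sC μ * ‖g‖ * (Real.exp (Kc μ * t) - 1) / Kc μ)
            = Real.exp (-(Kc μ * t)) +
              (sC μ / Kc μ) * ‖g‖ * (1 - Real.exp (-(Kc μ * t))) := by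
          field_simp
          linear_combination (sC μ * ‖g‖) * hE
        rw [expand]
        nlinarith [hE1, hE0.le, hg, h3, div_nonneg hC hK.le,
          mul_nonneg (div_nonneg hC hK.le) hg]

/-- the Picard map on bounded continuous functions on `[0,∞)`. -/
noncomputable def Phi (g : BoundedContinuousFunction (Ici (0:ℝ)) ℝ) :
    BoundedContinuousFunction (Ici (0:ℝ)) ℝ :=
  BoundedContinuousFunction.ofNormedAddCommGroup
    (fun t : Ici (0:ℝ) => Phi0 μ g t.1)
    ((Phi0_cont μ g).comp continuous_subtype_val)
    (1 + ‖g‖) (fun t => by rw [Real.norm_eq_abs]; exact Phi0_bound μ g t.2)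

lemma Phi_contract : ContractingWith (1/2 : NNReal) (Phi μ) := by
  constructor
  · rw [← NNReal.coe_lt_coe]; norm_num
  · apply LipschitzWith.of_dist_le_mul
    intro g₁ g₂
    have hK := Kc_pos μ
    have hC := sC_nonneg μ
    have hd : (0:ℝ) ≤ dist g₁ g₂ := dist_nonneg
    have hco : ((1/2 : NNReal) : ℝ) = 1/2 := by norm_num
    rw [hco]
    refine (BoundedContinuousFunction.dist_le (by positivity)).2 fun x => ?_
    obtain ⟨t, ht⟩ := x
    have key : ∀ s : ℝ, J μ (Fe μ g₁) s - J μ (Fe μ g₂) s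
        = J μ (fun v => Fe μ g₁ v - Fe μ g₂ v) s := by
      intro s
      obtain ⟨M₁, _, hM₁⟩ := Fe_loc μ g₁ s
      obtain ⟨M₂, _, hM₂⟩ := Fe_loc μ g₂ s
      rw [J, J, J]
      exact (sint_sub μ
        ((Fe_meas μ g₁).comp (measurable_const.add measurable_subtype_coe))
        (fun θ => hM₁ _ (by have h2 := θ.2.2; show s + (θ:ℝ) ≤ s; linarith))
        ((Fe_meas μ g₂).comp (measurable_const.add measurable_subtype_coe))
        (fun θ => hM₂ _ (by have h2 := θ.2.2; show s + (θ:ℝ) ≤ s; linarith))).symm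
    have hsub : ∀ T, ∃ M : ℝ, 0 ≤ M ∧ ∀ v ≤ T, |Fe μ g₁ v - Fe μ g₂ v| ≤ M :=
      bounded_on (fun v hv => by rw [Fe_zero μ g₁ hv, Fe_zero μ g₂ hv, sub_zero])
        ((Fe_cont μ g₁).sub (Fe_cont μ g₂))
    have hint : |∫ s in (0:ℝ)..t, J μ (fun v => Fe μ g₁ v - Fe μ g₂ v) s| ≤
        sC μ * dist g₁ g₂ * (Real.exp (Kc μ * t) - 1) / Kc μ :=
      prim_est μ hK ht hd fun s hs v hv => Fe_sub_bound μ g₁ g₂ hs hv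
    have hE : Real.exp (-(Kc μ * t)) * Real.exp (Kc μ * t) = 1 := by
      rw [← Real.exp_add]; simp
    have hE0 : 0 < Real.exp (-(Kc μ * t)) := Real.exp_pos _
    have hdist : dist (Phi μ g₁ ⟨t, ht⟩) (Phi μ g₂ ⟨t, ht⟩)
        = Real.exp (-(Kc μ * t)) *
          |∫ s in (0:ℝ)..t, J μ (fun v => Fe μ g₁ v - Fe μ g₂ v) s| := by
      show dist (Phi0 μ g₁ t) (Phi0 μ g₂ t) = _
      rw [Real.dist_eq, Phi0, Phi0, ← mul_sub, abs_mul, abs_of_nonneg hE0.le]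
      congr 1
      rw [add_sub_add_left_eq_sub, ← intervalIntegral.integral_sub
        (J_intervalIntegrable μ (Fe_meas μ g₁) (Fe_loc μ g₁) 0 t)
        (J_intervalIntegrable μ (Fe_meas μ g₂) (Fe_loc μ g₂) 0 t)]
      simp only [key]
    rw [hdist]
    calc Real.exp (-(Kc μ * t)) *
        |∫ s in (0:ℝ)..t, J μ (fun v => Fe μ g₁ v - Fe μ g₂ v) s|
        ≤ Real.exp (-(Kc μ * t)) *
          (sC μ * dist g₁ g₂ * (Real.exp (Kc μ * t) - 1) / Kc μ) :=
          mul_le_mul_of_nonneg_left hint hE0.le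
      _ ≤ 1/2 * dist g₁ g₂ := by
          have h3 : 2 * sC μ ≤ Kc μ := by unfold Kc; linarith
          have expand : Real.exp (-(Kc μ * t)) *
              (sC μ * dist g₁ g₂ * (Real.exp (Kc μ * t) - 1) / Kc μ)
              = (sC μ / Kc μ) * dist g₁ g₂ * (1 - Real.exp (-(Kc μ * t))) := by
            field_simp
            linear_combination (sC μ * dist g₁ g₂) * hE
          rw [expand]
          have h4 : sC μ / Kc μ ≤ 1/2 := by
            rw [div_le_iff₀ hK]; linarith
          nlinarith [mul_nonneg (mul_nonneg (div_nonneg hC hK.le) hd) hE0.le,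
            Real.exp_le_one_iff.2 (neg_nonpos.2 (mul_nonneg hK.le ht)),
            mul_nonneg (div_nonneg hC hK.le) hd]

end Construction
/-- difference of `J`'s is `J` of differences, for admissible functions -/
lemma J_sub (μ : SignedMeasure (Icc (-r) (0:ℝ))) {f g : ℝ → ℝ}
    (hf : Measurable f) (hfloc : ∀ T, ∃ M : ℝ, 0 ≤ M ∧ ∀ v ≤ T, |f v| ≤ M)
    (hg : Measurable g) (hgloc : ∀ T, ∃ M : ℝ, 0 ≤ M ∧ ∀ v ≤ T, |g v| ≤ M)
    (s : ℝ) : J μ f s - J μ g s = J μ (fun v => f v - g v) s := by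
  obtain ⟨M₁, _, hM₁⟩ := hfloc s
  obtain ⟨M₂, _, hM₂⟩ := hgloc s
  rw [J, J, J]
  exact (sint_sub μ
    (hf.comp (measurable_const.add measurable_subtype_coe))
    (fun θ => hM₁ _ (by have h2 := θ.2.2; show s + (θ:ℝ) ≤ s; linarith))
    (hg.comp (measurable_const.add measurable_subtype_coe))
    (fun θ => hM₂ _ (by have h2 := θ.2.2; show s + (θ:ℝ) ≤ s; linarith))).symm

/-- core uniqueness: a solution of the homogeneous equation vanishes -/
lemma homogeneous_zero (μ : SignedMeasure (Icc (-r) (0:ℝ))) {h : ℝ → ℝ}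
    (h0 : ∀ v < (0:ℝ), h v = 0) (hc : ContinuousOn h (Ici 0))
    (heq : ∀ t, 0 ≤ t → h t = ∫ s in (0:ℝ)..t, J μ h s)
    {u : ℝ} (hu : 0 ≤ u) : h u = 0 := by
  have hC := sC_nonneg μ
  have hm : Measurable h := ext_meas h0 hc
  obtain ⟨M, hM0, hM⟩ := bounded_on h0 hc u
  have claim : ∀ n : ℕ, ∀ w, 0 ≤ w → w ≤ u →
      |h w| ≤ M * (sC μ ^ n * w ^ n / (n.factorial : ℝ)) := by
    intro n
    induction n with
    | zero => intro w hw1 hw2; simpa using hM w hw2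
    | succ n ih =>
      intro w hw1 hw2
      have bineq : ∀ᵐ s ∂(volume.restrict (Set.uIoc (0:ℝ) w)),
          ‖J μ h s‖ ≤ (sC μ * M * sC μ ^ n / (n.factorial : ℝ)) * s ^ n := by
        rw [uIoc_of_le hw1]
        refine (ae_restrict_iff' measurableSet_Ioc).2
          (Filter.Eventually.of_forall fun s hs => ?_)
        rw [Real.norm_eq_abs]
        have hb : ∀ v ≤ s, |h v| ≤ M * (sC μ ^ n * s ^ n / (n.factorial : ℝ)) := by
          intro v hv
          rcases lt_or_ge v 0 with hv0 | hv0
          · rw [h0 v hv0, abs_zero]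
            have : (0:ℝ) ≤ s := hs.1.le
            positivity
          · refine (ih v hv0 (hv.trans (hs.2.trans hw2))).trans ?_
            gcongr
        refine (J_bound μ hb).trans_eq (by ring)
      have key := intervalIntegral.norm_integral_le_abs_of_norm_le bineq
        ((continuous_const.mul (continuous_pow n)).intervalIntegrable 0 w)
      rw [heq w hw1]
      rw [Real.norm_eq_abs] at key
      refine key.trans ?_
      rw [intervalIntegral.integral_const_mul, integral_pow, zero_pow (Nat.succ_ne_zero n), sub_zero]
      have hfac : (0:ℝ) < (n.factorial : ℝ) := by positivity
      have hval : sC μ * M * sC μ ^ n / (n.factorial : ℝ) * (w ^ (n+1) / (n+1))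
          = M * (sC μ ^ (n+1) * w ^ (n+1) / ((n+1).factorial : ℝ)) := by
        rw [Nat.factorial_succ]
        push_cast
        field_simp
        ring
      rw [abs_of_nonneg (by positivity)]
      exact le_of_eq hval
  have hlim : Tendsto (fun n : ℕ => M * (sC μ ^ n * u ^ n / (n.factorial : ℝ)))
      atTop (nhds 0) := by
    have : Tendsto (fun n : ℕ => (sC μ * u) ^ n / (n.factorial : ℝ)) atTop (nhds 0) :=
      FloorSemiring.tendsto_pow_div_factorial_atTop (sC μ * u)
    have := this.const_mul M
    simpa [mul_pow] using this
  have : |h u| ≤ 0 := ge_of_tendsto' hlim fun n => claim n u hu le_rfl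
  exact abs_eq_zero.1 (le_antisymm this (abs_nonneg _))

end Stmt12

/-- existence and uniqueness of the fundamental solution of the scalar linear
delay equation: a function `f`, vanishing on `(-∞, 0)`, continuous on `[0, ∞)`, with
`f(t) = 1 + ∫₀ᵗ ∫_{[-r,0]} f(s+θ) dμ(θ) ds` for all `t ≥ 0`; it is unique among such
functions. -/
theorem stmt_12 (r : ℝ) (hr : 0 < r)
    (μ : MeasureTheory.SignedMeasure (Set.Icc (-r) (0 : ℝ))) :
    ∃ f : ℝ → ℝ,
      ((∀ v : ℝ, v < 0 → f v = 0) ∧ ContinuousOn f (Set.Ici 0) ∧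
        ∀ t : ℝ, 0 ≤ t →
          f t = 1 + ∫ s in (0 : ℝ)..t, sintegral μ (fun θ => f (s + θ.1))) ∧
      ∀ g : ℝ → ℝ,
        ((∀ v : ℝ, v < 0 → g v = 0) ∧ ContinuousOn g (Set.Ici 0) ∧
          ∀ t : ℝ, 0 ≤ t →
            g t = 1 + ∫ s in (0 : ℝ)..t, sintegral μ (fun θ => g (s + θ.1))) →
        ∀ v : ℝ, g v = f v := by
  classical
  open Stmt12 in
  set gs : BoundedContinuousFunction (Set.Ici (0:ℝ)) ℝ :=
    ContractingWith.fixedPoint (Phi μ) (Phi_contract μ) with hgs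
  have hfix : Phi μ gs = gs := (Phi_contract μ).fixedPoint_isFixedPt
  set f : ℝ → ℝ := Fe μ gs with hfdef
  have hf0 : ∀ v : ℝ, v < 0 → f v = 0 := fun v hv => Fe_zero μ gs hv
  have hfc : ContinuousOn f (Set.Ici 0) := Fe_cont μ gs
  have hfm : Measurable f := Fe_meas μ gs
  have hfloc : ∀ T, ∃ M : ℝ, 0 ≤ M ∧ ∀ v ≤ T, |f v| ≤ M := Fe_loc μ gs
  have hfeq : ∀ t : ℝ, 0 ≤ t → f t = 1 + ∫ s in (0 : ℝ)..t, J μ f s := by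
    intro t ht
    have h1 : f t = Real.exp (Kc μ * t) * gs ⟨t, ht⟩ := dif_pos ht
    have h2 : gs ⟨t, ht⟩ = Phi0 μ gs t := by
      conv_lhs => rw [← hfix]
      rfl
    rw [h1, h2, Phi0, ← mul_assoc, ← Real.exp_add]
    simp
    rfl
  refine ⟨f, ⟨hf0, hfc, fun t ht => hfeq t ht⟩, ?_⟩
  rintro g ⟨hg0, hgc, hgeq⟩ v
  have hgm : Measurable g := ext_meas hg0 hgc
  have hgloc : ∀ T, ∃ M : ℝ, 0 ≤ M ∧ ∀ v ≤ T, |g v| ≤ M := bounded_on hg0 hgc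
  rcases lt_or_ge v 0 with hv | hv
  · rw [hg0 v hv, hf0 v hv]
  · have hh0 : ∀ w : ℝ, w < 0 → g w - f w = 0 := fun w hw => by
      rw [hg0 w hw, hf0 w hw, sub_zero]
    have hhc : ContinuousOn (fun w => g w - f w) (Set.Ici 0) := hgc.sub hfc
    have heq : ∀ t : ℝ, 0 ≤ t →
        g t - f t = ∫ s in (0 : ℝ)..t, J μ (fun w => g w - f w) s := by
      intro t ht
      have e1 : g t = 1 + ∫ s in (0 : ℝ)..t, J μ g s := hgeq t ht
      rw [e1, hfeq t ht, add_sub_add_left_eq_sub,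
        ← intervalIntegral.integral_sub (J_intervalIntegrable μ hgm hgloc 0 t)
          (J_intervalIntegrable μ hfm hfloc 0 t)]
      simp only [J_sub μ hgm hgloc hfm hfloc]
    have := homogeneous_zero μ hh0 hhc heq hv
    linarith [this]
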